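/- Let c > 0 and 0 < c₁ < c. Let ν be a probability density on ℝ with 0 ≤ ν(s) ≤ e^{−c|s|} for all s ∈ ℝ, let μ ∈ ℝ, σ > 0, and set f := ν − φ_{μ,σ} and f̂(z) := ∫_ℝ f(s) e^{izs} ds (which is well defined and holomorphic on the disc {z ∈ ℂ : |z| ≤ c₁}). Suppose ε > 0 is such that |f̂(z)| ≤ ε for all z ∈ ℂ with |z| ≤ c₁. Then for every k ∈ ℕ: | ∫_ℝ ( ν(s) − φ_{μ,σ}(s) ) s^k ds | ≤ (k! / c₁^k) ε. -/

import Mathlib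

open MeasureTheory Complex

/-- Gaussian density with mean `μ` and variance `σ`. -/
noncomputable def gaussDensity (μ σ x : ℝ) : ℝ :=
  (Real.sqrt (2 * Real.pi * σ))⁻¹ * Real.exp (-(x - μ) ^ 2 / (2 * σ))

/-- The (complex-argument) Fourier transform `f̂(z) = ∫ f(s) e^{izs} ds`. -/
noncomputable def fhat (f : ℝ → ℝ) (z : ℂ) : ℂ :=
  ∫ s : ℝ, (f s : ℂ) * Complex.exp (Complex.I * z * s)

section aux

open Real Set

lemma integrable_exp_neg_mul_abs' {d : ℝ} (hd : 0 < d) :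
    Integrable fun x : ℝ => Real.exp (-d * |x|) := by
  have hIoi : IntegrableOn (fun x : ℝ => Real.exp (-d * |x|)) (Ioi 0) :=
    (exp_neg_integrableOn_Ioi 0 hd).congr_fun
      (fun x hx => by rw [abs_of_pos (by exact hx)]) measurableSet_Ioi
  have hIic : IntegrableOn (fun x : ℝ => Real.exp (-d * |x|)) (Iic 0) := by
    rw [← Measure.map_neg_eq_self (volume : Measure ℝ)]
    let m : MeasurableEmbedding fun x : ℝ => -x := (Homeomorph.neg ℝ).measurableEmbedding
    rw [m.integrableOn_map_iff]
    simp_rw [Function.comp_def, abs_neg, neg_preimage, neg_Iic, neg_zero]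
    exact (integrableOn_Ici_iff_integrableOn_Ioi).mpr hIoi
  have := hIic.union hIoi
  rwa [Iic_union_Ioi, integrableOn_univ] at this

lemma pow_le_factorial_mul_exp (n : ℕ) {x : ℝ} (hx : 0 ≤ x) :
    x ^ n ≤ n.factorial * Real.exp x := by
  have h1 : x ^ n / n.factorial ≤ ∑ i ∈ Finset.range (n + 1), x ^ i / i.factorial :=
    Finset.single_le_sum (f := fun i => x ^ i / i.factorial)
      (fun i _ => by positivity) (Finset.self_mem_range_succ n)
  have h2 := Real.sum_le_exp_of_nonneg hx (n + 1)
  have hf : (0:ℝ) < n.factorial := by exact_mod_cast n.factorial_pos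
  calc x ^ n = (x ^ n / n.factorial) * n.factorial := by field_simp
  _ ≤ Real.exp x * n.factorial := mul_le_mul_of_nonneg_right (h1.trans h2) hf.le
  _ = n.factorial * Real.exp x := by ring

lemma master_bound (c b μ σ : ℝ) (hb : b < c) (hσ : 0 < σ) (n : ℕ) :
    ∃ K : ℝ, ∀ s : ℝ,
      (Real.exp (-c * |s|) + gaussDensity μ σ s) * |s| ^ n * Real.exp (b * |s|)
        ≤ K * Real.exp (-(min ((c - b) / 2) 1) * |s|) := by
  set d₀ : ℝ := (c - b) / 2 with hd₀def
  have hd₀ : 0 < d₀ := by simp [hd₀def]; linarith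
  set d : ℝ := min d₀ 1 with hddef
  have hd : 0 < d := lt_min hd₀ one_pos
  set A : ℝ := (Real.sqrt (2 * Real.pi * σ))⁻¹ with hAdef
  have hA : 0 ≤ A := by positivity
  set C : ℝ := (|μ| + σ * (b + 2)) ^ 2 / (2 * σ) with hCdef
  refine ⟨n.factorial / d₀ ^ n + A * n.factorial * Real.exp C, fun s => ?_⟩
  set t : ℝ := |s| with htdef
  have ht : 0 ≤ t := abs_nonneg s
  have key1 : Real.exp (-c * t) * t ^ n * Real.exp (b * t)
      ≤ n.factorial / d₀ ^ n * Real.exp (-d * t) := by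
    have h1 : (d₀ * t) ^ n ≤ n.factorial * Real.exp (d₀ * t) :=
      pow_le_factorial_mul_exp n (by positivity)
    have h2 : t ^ n ≤ n.factorial / d₀ ^ n * Real.exp (d₀ * t) := by
      rw [mul_pow] at h1
      rw [div_mul_eq_mul_div, le_div_iff₀ (by positivity)]
      calc t ^ n * d₀ ^ n = d₀ ^ n * t ^ n := by ring
      _ ≤ _ := h1
    calc Real.exp (-c * t) * t ^ n * Real.exp (b * t)
        ≤ Real.exp (-c * t) * (n.factorial / d₀ ^ n * Real.exp (d₀ * t)) * Real.exp (b * t) := by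
          apply mul_le_mul_of_nonneg_right _ (Real.exp_pos _).le
          exact mul_le_mul_of_nonneg_left h2 (Real.exp_pos _).le
      _ = n.factorial / d₀ ^ n * Real.exp (-c * t + d₀ * t + b * t) := by
          rw [Real.exp_add, Real.exp_add]; ring
      _ ≤ n.factorial / d₀ ^ n * Real.exp (-d * t) := by
          apply mul_le_mul_of_nonneg_left _ (by positivity)
          apply Real.exp_le_exp.2
          have hdd : d ≤ d₀ := min_le_left _ _
          have : -c * t + d₀ * t + b * t = -d₀ * t := by rw [hd₀def]; ring
          rw [this]
          nlinarith
  have key2 : gaussDensity μ σ s * t ^ n * Real.exp (b * t)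
      ≤ A * n.factorial * Real.exp C * Real.exp (-d * t) := by
    have h1 : t ^ n ≤ n.factorial * Real.exp t := pow_le_factorial_mul_exp n ht
    have hquad : -(s - μ) ^ 2 / (2 * σ) + t + b * t ≤ C - t := by
      have h2σ : (0:ℝ) < 2 * σ := by linarith
      have hμs : μ * s ≤ |μ| * t := by
        calc μ * s ≤ |μ * s| := le_abs_self _
        _ = |μ| * t := by rw [abs_mul]
      have hq' : -(s - μ) ^ 2 + 2 * σ * t + 2 * σ * (b * t)
          ≤ (|μ| + σ * (b + 2)) ^ 2 - 2 * σ * t := by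
        nlinarith [sq_nonneg (t - (|μ| + σ * (b + 2))), sq_nonneg μ, _root_.sq_abs s,
          _root_.sq_abs μ]
      have e1 : -(s - μ) ^ 2 / (2 * σ) + t + b * t
          = (-(s - μ) ^ 2 + 2 * σ * t + 2 * σ * (b * t)) / (2 * σ) := by
        field_simp
      have e2 : C - t = ((|μ| + σ * (b + 2)) ^ 2 - 2 * σ * t) / (2 * σ) := by
        rw [hCdef]; field_simp
      rw [e1, e2]
      gcongr
    have hg : gaussDensity μ σ s = A * Real.exp (-(s - μ) ^ 2 / (2 * σ)) := rfl
    calc gaussDensity μ σ s * t ^ n * Real.exp (b * t)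
        ≤ A * Real.exp (-(s - μ) ^ 2 / (2 * σ)) * (n.factorial * Real.exp t) * Real.exp (b * t) := by
          rw [hg]
          apply mul_le_mul_of_nonneg_right _ (Real.exp_pos _).le
          exact mul_le_mul_of_nonneg_left h1 (mul_nonneg hA (Real.exp_pos _).le)
      _ = A * n.factorial * Real.exp (-(s - μ) ^ 2 / (2 * σ) + t + b * t) := by
          rw [Real.exp_add, Real.exp_add]; ring
      _ ≤ A * n.factorial * Real.exp (C - t) := by
          apply mul_le_mul_of_nonneg_left (Real.exp_le_exp.2 hquad)
            (mul_nonneg hA (Nat.cast_nonneg _))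
      _ ≤ A * n.factorial * Real.exp (C + -d * t) := by
          apply mul_le_mul_of_nonneg_left (Real.exp_le_exp.2 _)
            (mul_nonneg hA (Nat.cast_nonneg _))
          have : d ≤ 1 := min_le_right _ _
          nlinarith
      _ = A * n.factorial * Real.exp C * Real.exp (-d * t) := by
          rw [Real.exp_add]; ring
  calc (Real.exp (-c * t) + gaussDensity μ σ s) * t ^ n * Real.exp (b * t)
      = Real.exp (-c * t) * t ^ n * Real.exp (b * t)
        + gaussDensity μ σ s * t ^ n * Real.exp (b * t) := by ring
    _ ≤ _ := by rw [add_mul]; exact add_le_add key1 key2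

end aux

/-- if a probability density `ν` decays like `e^{−c|s|}` and the
Fourier transform of `f = ν − φ_{μ,σ}` is bounded by `ε` on the complex disc of
radius `c₁ < c`, then all moments of `f` are bounded by `(k!/c₁^k) ε`. -/
theorem stmt16 (c c₁ : ℝ) (hc : 0 < c) (hc₁ : 0 < c₁) (hc₁c : c₁ < c)
    (ν : ℝ → ℝ) (hν0 : ∀ s, 0 ≤ ν s) (hνdecay : ∀ s : ℝ, ν s ≤ Real.exp (-c * |s|))
    (hνprob : ∫ s : ℝ, ν s = 1)
    (μ σ : ℝ) (hσ : 0 < σ) (ε : ℝ) (hε : 0 < ε)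
    (hF : ∀ z : ℂ, ‖z‖ ≤ c₁ →
        ‖fhat (fun s => ν s - gaussDensity μ σ s) z‖ ≤ ε) :
    ∀ k : ℕ,
      |∫ s : ℝ, (ν s - gaussDensity μ σ s) * s ^ k| ≤ ((k.factorial : ℝ) / c₁ ^ k) * ε := by
  intro k
  set f : ℝ → ℝ := fun s => ν s - gaussDensity μ σ s with hfdef
  have hG0 : ∀ s, 0 ≤ gaussDensity μ σ s := fun s => by unfold gaussDensity; positivity
  have hGcont : Continuous (gaussDensity μ σ) := by unfold gaussDensity; fun_prop
  have hνint : Integrable ν := by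
    by_contra h
    rw [integral_undef h] at hνprob
    exact one_ne_zero hνprob.symm
  have hfmeas : AEStronglyMeasurable f volume :=
    hνint.aestronglyMeasurable.sub hGcont.aestronglyMeasurable
  have habsf : ∀ s, |f s| ≤ Real.exp (-c * |s|) + gaussDensity μ σ s := fun s => by
    have h1 : f s = ν s - gaussDensity μ σ s := rfl
    rw [h1]
    refine abs_le.mpr ⟨?_, ?_⟩ <;>
      nlinarith [hν0 s, hνdecay s, hG0 s, (Real.exp_pos (-c * |s|)).le]
  set b : ℝ := (c₁ + c) / 2 with hbdef
  have hb0 : 0 < b := by rw [hbdef]; linarith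
  have hc₁b : c₁ < b := by rw [hbdef]; linarith
  have hbc : b < c := by rw [hbdef]; linarith
  set bnd : ℕ → ℝ → ℝ := fun n s =>
    (Real.exp (-c * |s|) + gaussDensity μ σ s) * |s| ^ n * Real.exp (b * |s|) with hbnddef
  have hbnd0 : ∀ n s, 0 ≤ bnd n s := fun n s => by
    rw [hbnddef]
    have := hG0 s
    have := (Real.exp_pos (-c * |s|)).le
    positivity
  have hbndint : ∀ n, Integrable (bnd n) := by
    intro n
    obtain ⟨K, hK⟩ := master_bound c b μ σ hbc hσ n
    have hd : 0 < min ((c - b) / 2) 1 := lt_min (by linarith) one_pos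
    refine Integrable.mono' ((integrable_exp_neg_mul_abs' hd).const_mul K) ?_ ?_
    · refine Continuous.aestronglyMeasurable ?_
      rw [hbnddef]
      fun_prop
    · filter_upwards with s
      rw [Real.norm_eq_abs, _root_.abs_of_nonneg (hbnd0 n s)]
      exact hK s
  set F : ℕ → ℂ → ℂ := fun n z =>
    ∫ s : ℝ, (f s : ℂ) * ((Complex.I * s) ^ n * Complex.exp (Complex.I * z * s)) with hFdef
  have hptw : ∀ (n : ℕ) (z : ℂ), ‖z‖ ≤ b → ∀ s : ℝ,
      ‖(f s : ℂ) * ((Complex.I * s) ^ n * Complex.exp (Complex.I * z * s))‖ ≤ bnd n s := by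
    intro n z hz s
    rw [norm_mul, norm_mul, norm_pow]
    have h1 : ‖(f s : ℂ)‖ = |f s| := by rw [Complex.norm_real, Real.norm_eq_abs]
    have h2 : ‖Complex.I * (s : ℂ)‖ = |s| := by
      rw [norm_mul, Complex.norm_I, one_mul, Complex.norm_real, Real.norm_eq_abs]
    have h3 : ‖Complex.exp (Complex.I * z * s)‖ ≤ Real.exp (b * |s|) := by
      rw [Complex.norm_exp]
      apply Real.exp_le_exp.2
      have hre : (Complex.I * z * (s : ℂ)).re = -z.im * s := by
        simp [Complex.mul_re]
      rw [hre]
      calc -z.im * s ≤ |(-z.im) * s| := le_abs_self _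
        _ = |z.im| * |s| := by rw [abs_mul, abs_neg]
        _ ≤ ‖z‖ * |s| :=
            mul_le_mul_of_nonneg_right (Complex.abs_im_le_norm z) (abs_nonneg s)
        _ ≤ b * |s| := mul_le_mul_of_nonneg_right hz (abs_nonneg s)
    rw [h1, h2]
    calc |f s| * (|s| ^ n * ‖Complex.exp (Complex.I * z * s)‖)
        ≤ (Real.exp (-c * |s|) + gaussDensity μ σ s) * (|s| ^ n * Real.exp (b * |s|)) := by
          apply mul_le_mul (habsf s)
            (mul_le_mul_of_nonneg_left h3 (pow_nonneg (abs_nonneg s) n))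
            (mul_nonneg (pow_nonneg (abs_nonneg s) n) (norm_nonneg _))
            (add_nonneg (Real.exp_pos _).le (hG0 s))
      _ = bnd n s := by rw [hbnddef]; ring
  have hmeasF : ∀ (n : ℕ) (z : ℂ), AEStronglyMeasurable
      (fun s : ℝ => (f s : ℂ) * ((Complex.I * s) ^ n * Complex.exp (Complex.I * z * s)))
      volume := by
    intro n z
    exact (Complex.continuous_ofReal.comp_aestronglyMeasurable hfmeas).mul
      (Continuous.aestronglyMeasurable (by fun_prop))
  have hFint : ∀ (n : ℕ) (z : ℂ), ‖z‖ ≤ b →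
      Integrable (fun s : ℝ =>
        (f s : ℂ) * ((Complex.I * s) ^ n * Complex.exp (Complex.I * z * s))) := by
    intro n z hz
    exact Integrable.mono' (hbndint n) (hmeasF n z)
      (Filter.Eventually.of_forall (hptw n z hz))
  have hasDeriv : ∀ (n : ℕ) (z₀ : ℂ), ‖z₀‖ < b →
      HasDerivAt (F n) (F (n + 1) z₀) z₀ := by
    intro n z₀ hz₀
    have hδ : 0 < b - ‖z₀‖ := by linarith
    have hzb : ∀ z ∈ Metric.ball z₀ (b - ‖z₀‖), ‖z‖ ≤ b := by
      intro z hz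
      rw [Metric.mem_ball, Complex.dist_eq] at hz
      have h2 : ‖z‖ - ‖z₀‖ ≤ ‖z - z₀‖ := by
        simpa using norm_sub_norm_le z z₀
      linarith
    have key := hasDerivAt_integral_of_dominated_loc_of_deriv_le
      (F := fun z s => (f s : ℂ) * ((Complex.I * s) ^ n * Complex.exp (Complex.I * z * s)))
      (F' := fun z s => (f s : ℂ) * ((Complex.I * s) ^ (n + 1) * Complex.exp (Complex.I * z * s)))
      (x₀ := z₀) (bound := bnd (n + 1)) (Metric.ball_mem_nhds z₀ hδ)
      (Filter.Eventually.of_forall fun z => hmeasF n z)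
      (hFint n z₀ hz₀.le)
      (hmeasF (n + 1) z₀)
      (Filter.Eventually.of_forall fun s z hz => hptw (n + 1) z (hzb z hz) s)
      (hbndint (n + 1))
      (Filter.Eventually.of_forall fun s z _hz => ?_)
    · exact key.2
    · have h0 : HasDerivAt (fun z : ℂ => Complex.I * z * (s : ℂ)) (Complex.I * s) z := by
        simpa using ((hasDerivAt_id z).const_mul Complex.I).mul_const (s : ℂ)
      have h2 := (h0.cexp).const_mul ((f s : ℂ) * (Complex.I * s) ^ n)
      have hfun : (fun z : ℂ => (f s : ℂ) * ((Complex.I * s) ^ n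
          * Complex.exp (Complex.I * z * s)))
          = fun z : ℂ => (f s : ℂ) * (Complex.I * s) ^ n * Complex.exp (Complex.I * z * s) := by
        funext w; ring
      rw [hfun]
      exact h2.congr_deriv (by ring)
  have hfhatF0 : fhat f = F 0 := by
    funext z
    rw [hFdef]
    unfold fhat
    simp only [pow_zero, one_mul]
  have hdiffball : ∀ z ∈ Metric.ball (0 : ℂ) b, HasDerivAt (fhat f) (F 1 z) z := by
    intro z hz
    rw [hfhatF0]
    rw [mem_ball_zero_iff] at hz
    exact hasDeriv 0 z hz
  set R : NNReal := ⟨c₁, hc₁.le⟩ with hRdef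
  have hRc : (R : ℝ) = c₁ := rfl
  have hdiffOn : DifferentiableOn ℂ (fhat f) (Metric.closedBall 0 (R : ℝ)) := by
    intro z hz
    rw [Metric.mem_closedBall, Complex.dist_eq, sub_zero] at hz
    have hzb : z ∈ Metric.ball (0 : ℂ) b := by
      rw [mem_ball_zero_iff]
      calc ‖z‖ ≤ (R : ℝ) := hz
        _ = c₁ := hRc
        _ < b := hc₁b
    exact (hdiffball z hzb).differentiableAt.differentiableWithinAt
  have hps : HasFPowerSeriesOnBall (fhat f) (cauchyPowerSeries (fhat f) 0 (R : ℝ)) 0 R :=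
    hdiffOn.hasFPowerSeriesOnBall (by rwa [← NNReal.coe_pos, hRc])
  have hIter : ∀ n : ℕ, ∀ z ∈ Metric.ball (0 : ℂ) b, iteratedDeriv n (fhat f) z = F n z := by
    intro n
    induction n with
    | zero => intro z _hz; rw [iteratedDeriv_zero, hfhatF0]
    | succ n ih =>
      intro z hz
      rw [iteratedDeriv_succ]
      have heq : iteratedDeriv n (fhat f) =ᶠ[nhds z] F n :=
        Filter.eventuallyEq_of_mem (Metric.isOpen_ball.mem_nhds hz) ih
      rw [heq.deriv_eq]
      rw [mem_ball_zero_iff] at hz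
      exact (hasDeriv n z hz).deriv
  have hcoef : ∀ n : ℕ,
      (n.factorial : ℂ) * cauchyPowerSeries (fhat f) 0 (R : ℝ) n (fun _ => 1) = F n 0 := by
    intro n
    have h1 := hps.factorial_smul (1 : ℂ) n
    rw [← iteratedDeriv_eq_iteratedFDeriv] at h1
    rw [hIter n 0 (Metric.mem_ball_self hb0)] at h1
    rw [← h1, nsmul_eq_mul]
  have hcont_fhat : ContinuousOn (fhat f) (Metric.ball (0 : ℂ) b) := fun z hz =>
    ((hdiffball z hz).differentiableAt.continuousAt).continuousWithinAt
  have hcirc : Continuous fun θ : ℝ => fhat f (circleMap 0 (R : ℝ) θ) := by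
    apply hcont_fhat.comp_continuous (continuous_circleMap 0 (R : ℝ))
    intro θ
    rw [mem_ball_zero_iff, norm_circleMap_zero, hRc,
      _root_.abs_of_nonneg hc₁.le]
    exact hc₁b
  have hIntNorm : (∫ θ in (0:ℝ)..2 * Real.pi, ‖fhat f (circleMap 0 (R : ℝ) θ)‖)
      ≤ 2 * Real.pi * ε := by
    calc (∫ θ in (0:ℝ)..2 * Real.pi, ‖fhat f (circleMap 0 (R : ℝ) θ)‖)
        ≤ ∫ _θ in (0:ℝ)..2 * Real.pi, ε := by
          apply intervalIntegral.integral_mono_on Real.two_pi_pos.le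
            (hcirc.norm.intervalIntegrable _ _) intervalIntegrable_const
          intro θ _
          apply hF
          rw [norm_circleMap_zero, hRc, _root_.abs_of_nonneg hc₁.le]
      _ = 2 * Real.pi * ε := by simp
  have hPk : ‖cauchyPowerSeries (fhat f) 0 (R : ℝ) k (fun _ => 1)‖ ≤ ε * (c₁ ^ k)⁻¹ := by
    calc ‖cauchyPowerSeries (fhat f) 0 (R : ℝ) k (fun _ => 1)‖
        ≤ ‖cauchyPowerSeries (fhat f) 0 (R : ℝ) k‖ * ∏ _i : Fin k, ‖(1 : ℂ)‖ :=
          ContinuousMultilinearMap.le_opNorm _ _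
      _ = ‖cauchyPowerSeries (fhat f) 0 (R : ℝ) k‖ := by simp
      _ ≤ ((2 * Real.pi)⁻¹ * ∫ θ in (0:ℝ)..2 * Real.pi, ‖fhat f (circleMap 0 (R : ℝ) θ)‖)
            * |(R : ℝ)|⁻¹ ^ k := norm_cauchyPowerSeries_le _ _ _ _
      _ ≤ ε * (c₁ ^ k)⁻¹ := by
          have habsR : |(R : ℝ)| = c₁ := by rw [hRc]; exact _root_.abs_of_nonneg hc₁.le
          rw [habsR, ← inv_pow]
          apply mul_le_mul_of_nonneg_right _ (by positivity)
          calc (2 * Real.pi)⁻¹ * ∫ θ in (0:ℝ)..2 * Real.pi, ‖fhat f (circleMap 0 (R : ℝ) θ)‖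
              ≤ (2 * Real.pi)⁻¹ * (2 * Real.pi * ε) := by
                apply mul_le_mul_of_nonneg_left hIntNorm (by positivity)
            _ = ε := by
                field_simp
  have hFk0 : F k 0 = Complex.I ^ k * ((∫ s : ℝ, f s * s ^ k) : ℝ) := by
    rw [hFdef]
    simp only [mul_zero, zero_mul, Complex.exp_zero, mul_one]
    calc (∫ s : ℝ, (f s : ℂ) * (Complex.I * s) ^ k)
        = ∫ s : ℝ, Complex.I ^ k • (((f s * s ^ k : ℝ)) : ℂ) := by
          congr 1; funext s; rw [smul_eq_mul]; push_cast; ring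
      _ = Complex.I ^ k • ∫ s : ℝ, (((f s * s ^ k : ℝ)) : ℂ) := integral_smul _ _
      _ = Complex.I ^ k * ((∫ s : ℝ, f s * s ^ k) : ℝ) := by rw [smul_eq_mul]; congr 1; exact integral_ofReal (𝕜 := ℂ)
  have habs : |∫ s : ℝ, f s * s ^ k| = ‖F k 0‖ := by
    rw [hFk0, norm_mul, norm_pow, Complex.norm_I, one_pow, one_mul, Complex.norm_real,
      Real.norm_eq_abs]
  calc |∫ s : ℝ, f s * s ^ k| = ‖F k 0‖ := habs
    _ = ‖(k.factorial : ℂ) * cauchyPowerSeries (fhat f) 0 (R : ℝ) k (fun _ => 1)‖ := by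
        rw [hcoef k]
    _ = (k.factorial : ℝ) * ‖cauchyPowerSeries (fhat f) 0 (R : ℝ) k (fun _ => 1)‖ := by
        rw [norm_mul, Complex.norm_natCast]
    _ ≤ (k.factorial : ℝ) * (ε * (c₁ ^ k)⁻¹) :=
        mul_le_mul_of_nonneg_left hPk (Nat.cast_nonneg _)
    _ = ((k.factorial : ℝ) / c₁ ^ k) * ε := by ring
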